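/- Let F be a finite field with |F| ≥ 7 and let η₀,…,η₆ be 7 distinct elements of F. Then one can choose 6 distinct elements λ₀,…,λ₅ from {η₀,…,η₆} such that (λ₁−λ₃)(λ₁−λ₅)(λ₂−λ₀)(λ₂−λ₄) ≠ (λ₂−λ₃)(λ₂−λ₅)(λ₁−λ₀)(λ₁−λ₄). -/
import Mathlib

private lemma pick_ne {F : Type*} [Field F] {p q s x y : F} (hs : s ≠ 0) (hxy : x ≠ y)
    (hpq : p - q = s * (x - y)) : p ≠ 0 ∨ q ≠ 0 := by
  by_contra h
  push_neg at h
  have h0 : s * (x - y) = 0 := by rw [← hpq, h.1, h.2]; ring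
  exact mul_ne_zero hs (sub_ne_zero.mpr hxy) h0

private lemma leaf {F : Type*} [Field F] (η : Fin 7 → F) (hη : Function.Injective η)
    (i j l : Fin 7) (hσ : Function.Injective ![i, 0, 1, 2, j, l])
    (hk : (η 0 - η 2) * (η 0 - η l) * ((η 1 - η i) * (η 1 - η j)) -
          (η 1 - η 2) * (η 1 - η l) * ((η 0 - η i) * (η 0 - η j)) ≠ 0) :
    ∃ lam : Fin 6 → F, Function.Injective lam ∧ (∀ t, lam t ∈ Set.range η) ∧
      (lam 1 - lam 3) * (lam 1 - lam 5) * ((lam 2 - lam 0) * (lam 2 - lam 4)) ≠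
      (lam 2 - lam 3) * (lam 2 - lam 5) * ((lam 1 - lam 0) * (lam 1 - lam 4)) := by
  refine ⟨η ∘ ![i, 0, 1, 2, j, l], hη.comp hσ, fun t => ⟨_, rfl⟩, ?_⟩
  show (η 0 - η 2) * (η 0 - η l) * ((η 1 - η i) * (η 1 - η j)) ≠
       (η 1 - η 2) * (η 1 - η l) * ((η 0 - η i) * (η 0 - η j))
  intro hEq
  exact hk (by linear_combination hEq)

theorem stmt_0 (F : Type*) [Field F] [Fintype F] (hF : 7 ≤ Fintype.card F)
    (η : Fin 7 → F) (hη : Function.Injective η) :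
    ∃ lam : Fin 6 → F, Function.Injective lam ∧ (∀ i, lam i ∈ Set.range η) ∧
      (lam 1 - lam 3) * (lam 1 - lam 5) * ((lam 2 - lam 0) * (lam 2 - lam 4)) ≠
      (lam 2 - lam 3) * (lam 2 - lam 5) * ((lam 1 - lam 0) * (lam 1 - lam 4)) := by
  have hab : η 0 - η 1 ≠ 0 := sub_ne_zero.mpr (hη.ne (by decide))
  rcases pick_ne (p := (η 1 - η 2) * (η 0 - η 3) - (η 0 - η 2) * (η 1 - η 3))
      (q := (η 1 - η 2) * (η 0 - η 4) - (η 0 - η 2) * (η 1 - η 4))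
      hab (hη.ne (by decide : (3 : Fin 7) ≠ 4)) (by ring) with hd | hd
  · -- lam0 = η 3
    rcases pick_ne (p := (η 0 - η 2) * (η 1 - η 3) * (η 1 - η 4) - (η 1 - η 2) * (η 0 - η 3) * (η 0 - η 4))
        (q := (η 0 - η 2) * (η 1 - η 3) * (η 1 - η 5) - (η 1 - η 2) * (η 0 - η 3) * (η 0 - η 5))
        hd (hη.ne (by decide : (4 : Fin 7) ≠ 5)) (by ring) with he | he
    · -- lam4 = η 4
      have hs : (η 1 - η 2) * (η 0 - η 3) * (η 0 - η 4) - (η 0 - η 2) * (η 1 - η 3) * (η 1 - η 4) ≠ 0 := fun h0 => he (by linear_combination -h0)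
      rcases pick_ne (p := (η 0 - η 2) * (η 0 - η 5) * ((η 1 - η 3) * (η 1 - η 4)) - (η 1 - η 2) * (η 1 - η 5) * ((η 0 - η 3) * (η 0 - η 4)))
          (q := (η 0 - η 2) * (η 0 - η 6) * ((η 1 - η 3) * (η 1 - η 4)) - (η 1 - η 2) * (η 1 - η 6) * ((η 0 - η 3) * (η 0 - η 4)))
          hs (hη.ne (by decide : (5 : Fin 7) ≠ 6)) (by ring) with hk | hk
      · exact leaf η hη 3 4 5 (by decide) hk
      · exact leaf η hη 3 4 6 (by decide) hk
    · -- lam4 = η 5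
      have hs : (η 1 - η 2) * (η 0 - η 3) * (η 0 - η 5) - (η 0 - η 2) * (η 1 - η 3) * (η 1 - η 5) ≠ 0 := fun h0 => he (by linear_combination -h0)
      rcases pick_ne (p := (η 0 - η 2) * (η 0 - η 4) * ((η 1 - η 3) * (η 1 - η 5)) - (η 1 - η 2) * (η 1 - η 4) * ((η 0 - η 3) * (η 0 - η 5)))
          (q := (η 0 - η 2) * (η 0 - η 6) * ((η 1 - η 3) * (η 1 - η 5)) - (η 1 - η 2) * (η 1 - η 6) * ((η 0 - η 3) * (η 0 - η 5)))
          hs (hη.ne (by decide : (4 : Fin 7) ≠ 6)) (by ring) with hk | hk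
      · exact leaf η hη 3 5 4 (by decide) hk
      · exact leaf η hη 3 5 6 (by decide) hk
  · -- lam0 = η 4
    rcases pick_ne (p := (η 0 - η 2) * (η 1 - η 4) * (η 1 - η 3) - (η 1 - η 2) * (η 0 - η 4) * (η 0 - η 3))
        (q := (η 0 - η 2) * (η 1 - η 4) * (η 1 - η 5) - (η 1 - η 2) * (η 0 - η 4) * (η 0 - η 5))
        hd (hη.ne (by decide : (3 : Fin 7) ≠ 5)) (by ring) with he | he
    · -- lam4 = η 3
      have hs : (η 1 - η 2) * (η 0 - η 4) * (η 0 - η 3) - (η 0 - η 2) * (η 1 - η 4) * (η 1 - η 3) ≠ 0 := fun h0 => he (by linear_combination -h0)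
      rcases pick_ne (p := (η 0 - η 2) * (η 0 - η 5) * ((η 1 - η 4) * (η 1 - η 3)) - (η 1 - η 2) * (η 1 - η 5) * ((η 0 - η 4) * (η 0 - η 3)))
          (q := (η 0 - η 2) * (η 0 - η 6) * ((η 1 - η 4) * (η 1 - η 3)) - (η 1 - η 2) * (η 1 - η 6) * ((η 0 - η 4) * (η 0 - η 3)))
          hs (hη.ne (by decide : (5 : Fin 7) ≠ 6)) (by ring) with hk | hk
      · exact leaf η hη 4 3 5 (by decide) hk
      · exact leaf η hη 4 3 6 (by decide) hk
    · -- lam4 = η 5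
      have hs : (η 1 - η 2) * (η 0 - η 4) * (η 0 - η 5) - (η 0 - η 2) * (η 1 - η 4) * (η 1 - η 5) ≠ 0 := fun h0 => he (by linear_combination -h0)
      rcases pick_ne (p := (η 0 - η 2) * (η 0 - η 3) * ((η 1 - η 4) * (η 1 - η 5)) - (η 1 - η 2) * (η 1 - η 3) * ((η 0 - η 4) * (η 0 - η 5)))
          (q := (η 0 - η 2) * (η 0 - η 6) * ((η 1 - η 4) * (η 1 - η 5)) - (η 1 - η 2) * (η 1 - η 6) * ((η 0 - η 4) * (η 0 - η 5)))
          hs (hη.ne (by decide : (3 : Fin 7) ≠ 6)) (by ring) with hk | hk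
      · exact leaf η hη 4 5 3 (by decide) hk
      · exact leaf η hη 4 5 6 (by decide) hk
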